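/- If a ∈ (−π²/2, 0), then v0(a) < 0; that is, the supremum of the real parts of the complex solutions of λ − a ∫_{−1}^0 e^{λu} du = 0 is strictly negative. -/

import Mathlib

open MeasureTheory Real

/-- The characteristic function `h_a(λ) = λ − a ∫_{−1}^0 e^{λu} du`. -/
noncomputable def charFn (a : ℝ) (lam : ℂ) : ℂ :=
  lam - a * ∫ u in (-1:ℝ)..0, Complex.exp (lam * u)

/-- The set `Λ_a` of complex solutions of the characteristic equation. -/
def charRoots (a : ℝ) : Set ℂ := {lam | charFn a lam = 0}

/-- `v₀(a) = sup{Re λ : λ ∈ Λ_a}`. -/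
noncomputable def v0 (a : ℝ) : ℝ := sSup (Complex.re '' charRoots a)

/-- The auxiliary entire function `z² − a(1 − e^{−z})`. -/
noncomputable def Gfn (a : ℝ) (z : ℂ) : ℂ := z ^ 2 - a * (1 - Complex.exp (-z))

lemma integral_exp_eq {z : ℂ} (hz : z ≠ 0) :
    (∫ u in (-1:ℝ)..0, Complex.exp (z * u)) = (1 - Complex.exp (-z)) / z := by
  rw [integral_exp_mul_complex hz]
  norm_num

lemma charFn_zero (a : ℝ) : charFn a 0 = -a := by
  simp [charFn]

lemma charFn_eq (a : ℝ) {z : ℂ} (hz : z ≠ 0) : charFn a z = Gfn a z / z := by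
  rw [charFn, integral_exp_eq hz, Gfn]
  field_simp

lemma mem_charRoots_iff {a : ℝ} (ha : a ≠ 0) {z : ℂ} :
    z ∈ charRoots a ↔ z ≠ 0 ∧ Gfn a z = 0 := by
  constructor
  · intro h
    have hz : z ≠ 0 := by
      rintro rfl
      rw [charRoots, Set.mem_setOf_eq, charFn_zero] at h
      exact ha (by exact_mod_cast neg_eq_zero.mp h)
    refine ⟨hz, ?_⟩
    have := h
    rw [charRoots, Set.mem_setOf_eq, charFn_eq a hz, div_eq_zero_iff] at this
    tauto
  · rintro ⟨hz, hG⟩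
    rw [charRoots, Set.mem_setOf_eq, charFn_eq a hz, hG, zero_div]


lemma sq_eq_of_Gfn {a : ℝ} {z : ℂ} (h : Gfn a z = 0) :
    z ^ 2 = (a : ℂ) * (1 - Complex.exp (-z)) := by
  rw [Gfn, sub_eq_zero] at h; exact h

lemma norm_sq_root {a : ℝ} (ha₂ : a < 0) {z : ℂ} (h : Gfn a z = 0) :
    ‖z‖ ^ 2 = (-a) * ‖1 - Complex.exp (-z)‖ := by
  have h2 := sq_eq_of_Gfn h
  have := congrArg norm h2
  rw [norm_pow, norm_mul, Complex.norm_real, Real.norm_eq_abs, abs_of_neg ha₂] at this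
  exact this

-- imaginary part equation
lemma im_eq {a : ℝ} {z : ℂ} (h : Gfn a z = 0) :
    2 * z.re * z.im = a * (Real.exp (-z.re) * Real.sin z.im) := by
  have h2 := sq_eq_of_Gfn h
  have := congrArg Complex.im h2
  simp [Complex.exp_im, Complex.exp_re, pow_two, Complex.mul_im, Complex.mul_re] at this
  rw [← this]; ring

lemma re_eq {a : ℝ} {z : ℂ} (h : Gfn a z = 0) :
    z.re ^ 2 - z.im ^ 2 = a * (1 - Real.exp (-z.re) * Real.cos z.im) := by
  have h2 := sq_eq_of_Gfn h
  have := congrArg Complex.re h2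
  simp [Complex.exp_im, Complex.exp_re, pow_two, Complex.mul_im, Complex.mul_re] at this
  rw [← this]; ring

lemma re_neg_of_root (a : ℝ) (ha₁ : -(π ^ 2) / 2 < a) (ha₂ : a < 0) {z : ℂ}
    (hz : z ≠ 0) (hG : Gfn a z = 0) : z.re < 0 := by
  by_contra hx
  push_neg at hx  -- 0 ≤ z.re
  set x := z.re with hxdef
  set y := z.im with hydef
  -- norm bound
  have hexp : Real.exp (-x) ≤ 1 := Real.exp_le_one_iff.mpr (by linarith)
  have habs : ‖1 - Complex.exp (-z)‖ ≤ 2 := by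
    have h1 : ‖1 - Complex.exp (-z)‖ ≤ 1 + Real.exp (-x) := by
      have := norm_sub_le (1 : ℂ) (Complex.exp (-z))
      simpa [Complex.norm_exp] using this
    linarith
  have hn := norm_sq_root ha₂ hG
  have hlt : ‖z‖ ^ 2 < π ^ 2 := by
    have : (-a) * ‖1 - Complex.exp (-z)‖ ≤ (-a) * 2 :=
      mul_le_mul_of_nonneg_left habs (by linarith)
    calc ‖z‖ ^ 2 ≤ (-a) * 2 := by rw [hn]; exact this
    _ < π ^ 2 := by linarith
  have hzsq : ‖z‖ ^ 2 = x ^ 2 + y ^ 2 := by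
    rw [Complex.sq_norm, Complex.normSq_apply]; ring
  have hy2 : y ^ 2 < π ^ 2 := by nlinarith [sq_nonneg x]
  have hypi : |y| < π := abs_lt_of_sq_lt_sq hy2 Real.pi_pos.le
  have him := im_eq hG
  have hre := re_eq hG
  rw [← hxdef, ← hydef] at him hre
  rcases lt_trichotomy y 0 with hy | hy | hy
  · -- y < 0 : sin y < 0, RHS > 0, LHS ≤ 0
    have hsin : Real.sin y < 0 := by
      have : 0 < -y := by linarith
      have hlt : -y < π := by
        have := (abs_lt.mp hypi).1; linarith
      have := Real.sin_pos_of_pos_of_lt_pi this hlt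
      rw [Real.sin_neg] at this; linarith
    have hRHS : 0 < a * (Real.exp (-x) * Real.sin y) :=
      mul_pos_of_neg_of_neg ha₂ (mul_neg_of_pos_of_neg (Real.exp_pos _) hsin)
    nlinarith
  · -- y = 0
    have hx2 : x ^ 2 = a * (1 - Real.exp (-x)) := by
      rw [hy] at hre; simpa using hre
    have h1 : a * (1 - Real.exp (-x)) ≤ 0 :=
      mul_nonpos_of_nonpos_of_nonneg ha₂.le (by linarith)
    have hx0 : x = 0 := by nlinarith
    exact hz (Complex.ext (by rw [← hxdef, hx0]; rfl) (by rw [← hydef, hy]; rfl))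
  · -- y > 0 : sin y > 0, RHS < 0, LHS ≥ 0
    have hlt : y < π := by have := (abs_lt.mp hypi).2; linarith
    have hsin : 0 < Real.sin y := Real.sin_pos_of_pos_of_lt_pi hy hlt
    have hRHS : a * (Real.exp (-x) * Real.sin y) < 0 :=
      mul_neg_of_neg_of_pos ha₂ (mul_pos (Real.exp_pos _) hsin)
    nlinarith


-- upper bound when re ≥ -1 and -a ≤ 5
lemma norm_le_of_root {a : ℝ} (ha₂ : a < 0) (ha5 : -a ≤ 5) {z : ℂ}
    (hG : Gfn a z = 0) (hre : -1 ≤ z.re) : ‖z‖ ≤ 5 := by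
  have hn := norm_sq_root ha₂ hG
  have habs : ‖1 - Complex.exp (-z)‖ ≤ 1 + Real.exp 1 := by
    have h1 := norm_sub_le (1 : ℂ) (Complex.exp (-z))
    have h2 : Real.exp (-z.re) ≤ Real.exp 1 := Real.exp_le_exp.mpr (by linarith)
    simp only [Complex.norm_exp, norm_one, Complex.neg_re] at h1
    linarith
  have he : Real.exp 1 ≤ 3 := by
    have := Real.exp_one_lt_d9; linarith
  have h20 : ‖z‖ ^ 2 ≤ 25 := by
    rw [hn]
    calc (-a) * ‖1 - Complex.exp (-z)‖ ≤ 5 * (1 + Real.exp 1) := by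
          apply mul_le_mul ha5 habs (norm_nonneg _) (by norm_num)
    _ ≤ 25 := by linarith
  nlinarith [norm_nonneg z]

-- lower bound
lemma norm_ge_of_root {a : ℝ} (ha₂ : a < 0) {z : ℂ} (hz : z ≠ 0)
    (hG : Gfn a z = 0) : (-a) / (1 + -a) ≤ ‖z‖ := by
  set b := -a with hb
  have hb0 : 0 < b := by simp [hb]; linarith
  rcases le_or_gt 1 ‖z‖ with h1 | h1
  · calc b / (1 + b) ≤ 1 := by
          rw [div_le_one (by linarith)]; linarith
    _ ≤ ‖z‖ := h1
  · have hn := norm_sq_root ha₂ hG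
    have ht0 : 0 < ‖z‖ := norm_pos_iff.mpr hz
    have hkey : ‖z‖ - ‖z‖ ^ 2 ≤ ‖1 - Complex.exp (-z)‖ := by
      have hb1 : ‖-z‖ ≤ 1 := by
        rw [norm_neg]; linarith
      have := Complex.norm_exp_sub_one_sub_id_le hb1
      have hid : (1 : ℂ) - Complex.exp (-z) = z - (Complex.exp (-z) - 1 - (-z)) := by ring
      have h3 : ‖z - (Complex.exp (-z) - 1 - (-z))‖ ≥
          ‖z‖ - ‖Complex.exp (-z) - 1 - (-z)‖ := by
        have := norm_sub_le ((Complex.exp (-z) - 1 - (-z))) z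
        have h4 := norm_sub_norm_le z (Complex.exp (-z) - 1 - (-z))
        simpa using h4
      rw [hid]
      have h5 : ‖Complex.exp (-z) - 1 - (-z)‖ ≤ ‖z‖ ^ 2 := by
        rw [norm_neg] at this
        simpa using this
      have h6 : ‖z‖ = ‖z‖ := rfl
      linarith
    have h7 : b * (‖z‖ - ‖z‖ ^ 2) ≤ ‖z‖ ^ 2 := by
      calc b * (‖z‖ - ‖z‖ ^ 2) ≤ b * ‖1 - Complex.exp (-z)‖ :=
            mul_le_mul_of_nonneg_left hkey hb0.le
      _ = ‖z‖ ^ 2 := by rw [hn, ← hb]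
    rw [div_le_iff₀ (by linarith)]
    nlinarith


lemma exists_zero_in_closedBall {f : ℂ → ℂ} (hf : Differentiable ℂ f) (c : ℂ) {r : ℝ}
    (hr : 0 < r) {m : ℝ} (hm : ‖f c‖ < m)
    (hb : ∀ w ∈ Metric.sphere c r, m ≤ ‖f w‖) :
    ∃ z ∈ Metric.closedBall c r, f z = 0 := by
  by_contra hcon
  push_neg at hcon
  have h0 : 0 < m := lt_of_le_of_lt (norm_nonneg _) hm
  have hfront : frontier (Metric.ball c r) = Metric.sphere c r := frontier_ball c hr.ne'
  have hclos : closure (Metric.ball c r) = Metric.closedBall c r := closure_ball c hr.ne'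
  have hd : DiffContOnCl ℂ (fun z => (f z)⁻¹) (Metric.ball c r) := by
    constructor
    · intro z hz
      exact ((hf z).inv (hcon z (Metric.ball_subset_closedBall hz))).differentiableWithinAt
    · rw [hclos]
      exact (hf.continuous.continuousOn).inv₀ fun z hz => hcon z hz
  have hkey : ‖(f c)⁻¹‖ ≤ m⁻¹ := by
    apply Complex.norm_le_of_forall_mem_frontier_norm_le Metric.isBounded_ball hd
    · intro z hz
      rw [hfront] at hz
      rw [norm_inv]
      exact inv_anti₀ h0 (hb z hz)
    · rw [hclos]; exact Metric.mem_closedBall_self hr.le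
  have hfc : f c ≠ 0 := hcon c (Metric.mem_closedBall_self hr.le)
  rw [norm_inv] at hkey
  have : m ≤ ‖f c‖ := by
    have h1 : 0 < ‖f c‖ := norm_pos_iff.mpr hfc
    rw [inv_le_inv₀ (by positivity) h0] at hkey
    exact hkey
  linarith


lemma Gfn_differentiable (a : ℝ) : Differentiable ℂ (Gfn a) := by
  unfold Gfn
  fun_prop

set_option maxHeartbeats 1000000 in
lemma exists_root_aux (a : ℝ) (ha₂ : a < 0) (ha5 : -a < 5) :
    ∃ z : ℂ, z ≠ 0 ∧ Gfn a z = 0 := by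
  set b : ℝ := -a with hbdef
  have hb0 : 0 < b := by simp only [hbdef]; linarith
  have hb5 : b < 5 := by simp only [hbdef]; linarith
  -- choose frequency
  set k : ℕ := 10 ^ 6 + ⌈100 * |Real.log b|⌉₊ with hkdef
  set y0 : ℝ := (2 * (k : ℝ) + 1) * π with hy0def
  have hpi3 : (3:ℝ) < π := Real.pi_gt_three
  have hk6 : (10:ℝ) ^ 6 ≤ (k : ℝ) := by
    have : (10 ^ 6 : ℕ) ≤ k := Nat.le_add_right _ _
    exact_mod_cast this
  have hy0big : 6 * 10 ^ 6 ≤ y0 := by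
    have h1 : (6 : ℝ) * (k:ℝ) ≤ (2 * (k:ℝ) + 1) * 3 := by linarith
    have h2 : (2 * (k:ℝ) + 1) * 3 ≤ y0 := by
      rw [hy0def]
      have : (0:ℝ) < 2 * (k:ℝ) + 1 := by positivity
      nlinarith
    linarith
  have hy0pos : 0 < y0 := by linarith
  have hlogb : |Real.log b| ≤ y0 / 600 := by
    have h1 : 100 * |Real.log b| ≤ (k : ℝ) := by
      calc 100 * |Real.log b| ≤ (⌈100 * |Real.log b|⌉₊ : ℝ) := Nat.le_ceil _
      _ ≤ (k : ℝ) := by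
            have : (⌈100 * |Real.log b|⌉₊ : ℕ) ≤ k := Nat.le_add_left _ _
            exact_mod_cast this
    have h2 : 6 * (k:ℝ) ≤ y0 := by
      have : (2 * (k:ℝ) + 1) * 3 ≤ y0 := by
        rw [hy0def]; nlinarith
      linarith
    linarith
  set L : ℝ := Real.log (y0 ^ 2 / b) with hLdef
  have hy0sq_b : 1 < y0 ^ 2 / b := by
    rw [lt_div_iff₀ hb0]; nlinarith
  have hL0 : 0 < L := Real.log_pos hy0sq_b
  have hLsplit : L = 2 * Real.log y0 - Real.log b := by
    rw [hLdef, Real.log_div (by positivity) (ne_of_gt hb0), Real.log_pow]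
    push_cast; ring
  have hlogy0 : Real.log y0 ≤ 2 * Real.sqrt y0 := by
    have h1 : Real.log y0 = 2 * Real.log (Real.sqrt y0) := by
      rw [Real.log_sqrt hy0pos.le]; ring
    have h2 : Real.log (Real.sqrt y0) ≤ Real.sqrt y0 - 1 :=
      Real.log_le_sub_one_of_pos (Real.sqrt_pos.mpr hy0pos)
    linarith
  have hsqrt : Real.sqrt y0 ≤ y0 / 1600 := by
    have h1 : (1600:ℝ) ≤ Real.sqrt y0 := by
      rw [show (1600:ℝ) = Real.sqrt (1600^2) by rw [Real.sqrt_sq]; norm_num]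
      exact Real.sqrt_le_sqrt (by nlinarith)
    have h2 := Real.sq_sqrt hy0pos.le
    nlinarith [Real.sqrt_nonneg y0]
  have hL : L ≤ y0 / 100 := by
    have h1 : L ≤ 2 * Real.log y0 + |Real.log b| := by
      rw [hLsplit]; linarith [neg_abs_le (Real.log b), le_abs_self (Real.log b)]
    have h2 : 2 * Real.log y0 ≤ y0 / 400 := by
      calc 2 * Real.log y0 ≤ 4 * Real.sqrt y0 := by linarith
      _ ≤ 4 * (y0/1600) := by linarith
      _ = y0 / 400 := by ring
    calc L ≤ y0/400 + y0/600 := by linarith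
    _ ≤ y0/100 := by linarith
  have hexpL : Real.exp L = y0^2/b := Real.exp_log (by positivity)
  have hcos : Real.cos y0 = -1 := by
    have h : y0 = (k:ℝ) * (2*π) + π := by rw [hy0def]; ring
    rw [h]; exact Real.cos_nat_mul_two_pi_add_pi k
  have hsin : Real.sin y0 = 0 := by
    have h : y0 = ((2*(k:ℤ)+1 : ℤ) : ℝ) * π := by rw [hy0def]; push_cast; ring
    rw [h]; exact Real.sin_int_mul_pi _
  have ha : (a : ℂ) = -(b : ℂ) := by rw [hbdef]; push_cast; ring
  clear hkdef hy0def hLdef hLsplit hlogy0 hsqrt hlogb hy0sq_b hk6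
  clear_value L y0 k
  clear hb5 hbdef
  clear_value b
  clear ha₂
  -- the center
  set c : ℂ := (↑(-L) + ↑y0 * Complex.I) with hcdef
  have hexpc : Complex.exp (-c) = -(↑(y0^2/b) : ℂ) := by
    have h1 : -c = (↑L : ℂ) + ↑(-y0) * Complex.I := by rw [hcdef]; push_cast; ring
    rw [h1, Complex.exp_add, Complex.exp_mul_I]
    rw [← Complex.ofReal_cos, ← Complex.ofReal_sin]
    rw [Real.cos_neg, Real.sin_neg, hcos, hsin, ← Complex.ofReal_exp, hexpL]
    push_cast
    ring
  have hbne : (b:ℂ) ≠ 0 := by exact_mod_cast hb0.ne'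
  have hGc : Gfn a c = ((L^2 + b : ℝ) : ℂ) - ((2*L*y0 : ℝ) : ℂ) * Complex.I := by
    rw [Gfn, hexpc, ha, hcdef]
    push_cast
    field_simp
    linear_combination (y0:ℂ)^2 * Complex.I_sq
  have hGcnorm : ‖Gfn a c‖ ≤ L^2 + b + 2*L*y0 := by
    rw [hGc]
    have h1 : ‖((L^2 + b : ℝ) : ℂ)‖ = L^2 + b := by
      rw [Complex.norm_real, Real.norm_eq_abs, abs_of_pos (by positivity)]
    have h2 : ‖((2*L*y0 : ℝ) : ℂ) * Complex.I‖ = 2*L*y0 := by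
      rw [norm_mul, Complex.norm_I, mul_one,
        Complex.norm_real, Real.norm_eq_abs, abs_of_pos (by positivity)]
    calc ‖((L^2 + b : ℝ) : ℂ) - ((2*L*y0 : ℝ) : ℂ) * Complex.I‖
        ≤ ‖((L^2 + b : ℝ) : ℂ)‖ + ‖((2*L*y0 : ℝ) : ℂ) * Complex.I‖ := norm_sub_le _ _
    _ = L^2 + b + 2*L*y0 := by rw [h1, h2]
  have hexpand : ∀ w : ℂ, Gfn a (c+w) = Gfn a c + (2*c - ((y0^2:ℝ):ℂ))*w + w^2
      + ((y0^2:ℝ):ℂ) * (Complex.exp (-w) - 1 - (-w)) := by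
    intro w
    rw [Gfn, Gfn, neg_add, Complex.exp_add, hexpc, ha]
    push_cast
    field_simp
    ring
  have hcnorm : ‖c‖ ≤ L + y0 := by
    rw [hcdef]
    have h1 : ‖((-L : ℝ) : ℂ)‖ = L := by
      rw [Complex.norm_real, Real.norm_eq_abs, abs_neg, abs_of_pos hL0]
    have h2 : ‖((y0 : ℝ):ℂ) * Complex.I‖ = y0 := by
      rw [norm_mul, Complex.norm_I, mul_one,
        Complex.norm_real, Real.norm_eq_abs, abs_of_pos hy0pos]
    calc ‖(↑(-L) : ℂ) + ↑y0 * Complex.I‖ ≤ ‖(↑(-L) : ℂ)‖ + ‖(↑y0:ℂ) * Complex.I‖ :=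
          norm_add_le _ _
    _ = L + y0 := by rw [h1, h2]
  set m : ℝ := L^2 + b + 2*L*y0 + 1 with hmdef
  have hy0100 : (100:ℝ) ≤ y0 := by linarith
  have hLy : L*y0 ≤ y0^2/100 := by nlinarith
  have hL2 : L^2 ≤ y0^2/10000 := by nlinarith
  have hy0sq : 100*y0 ≤ y0^2 := by nlinarith
  have hsphere : ∀ w ∈ Metric.sphere c (1/4 : ℝ), m ≤ ‖Gfn a w‖ := by
    intro w hw
    have hu : ‖w - c‖ = 1/4 := by
      rw [Metric.mem_sphere, dist_eq_norm] at hw; exact hw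
    set u : ℂ := w - c with hudef
    have hwcu : w = c + u := by rw [hudef]; ring
    have hE : ‖Complex.exp (-u) - 1 - (-u)‖ ≤ 1/16 := by
      have h1 : ‖-u‖ ≤ 1 := by
        rw [norm_neg]
        rw [hu]; norm_num
      have := Complex.norm_exp_sub_one_sub_id_le h1
      rw [norm_neg] at this
      calc ‖Complex.exp (-u) - 1 - (-u)‖ ≤ ‖u‖ ^ 2 := this
      _ = 1/16 := by rw [hu]; norm_num
    have hX : (y0^2 - 2*(L+y0))/4 ≤ ‖(2*c - ((y0^2:ℝ):ℂ))*u‖ := by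
      rw [norm_mul, hu]
      have h1 : y0^2 - 2*(L+y0) ≤ ‖2*c - ((y0^2:ℝ):ℂ)‖ := by
        have h2 : ‖((y0^2:ℝ):ℂ)‖ - ‖2*c‖ ≤ ‖2*c - ((y0^2:ℝ):ℂ)‖ := by
          have := norm_sub_norm_le (((y0^2:ℝ):ℂ)) (2*c)
          rw [← norm_neg (((y0^2:ℝ):ℂ)) ] at this
          calc ‖((y0^2:ℝ):ℂ)‖ - ‖2*c‖ ≤ ‖((y0^2:ℝ):ℂ) - 2*c‖ :=
                norm_sub_norm_le _ _
          _ = ‖2*c - ((y0^2:ℝ):ℂ)‖ := by rw [norm_sub_rev]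
        have h3 : ‖((y0^2:ℝ):ℂ)‖ = y0^2 := by
          rw [Complex.norm_real, Real.norm_eq_abs, abs_of_pos (by positivity : (0:ℝ) < y0^2)]
        have h4 : ‖2*c‖ ≤ 2*(L+y0) := by
          rw [norm_mul]
          simp only [Complex.norm_ofNat]
          linarith
        linarith
      nlinarith [norm_nonneg (2*c - ((y0^2:ℝ):ℂ))]
    have hY : ‖Gfn a c + u^2 + ((y0^2:ℝ):ℂ) * (Complex.exp (-u) - 1 - (-u))‖
        ≤ (L^2 + b + 2*L*y0) + 1/16 + y0^2/16 := by
      calc ‖Gfn a c + u^2 + ((y0^2:ℝ):ℂ) * (Complex.exp (-u) - 1 - (-u))‖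
          ≤ ‖Gfn a c + u^2‖ + ‖((y0^2:ℝ):ℂ) * (Complex.exp (-u) - 1 - (-u))‖ :=
            norm_add_le _ _
      _ ≤ ‖Gfn a c‖ + ‖u^2‖ + ‖((y0^2:ℝ):ℂ)‖ * ‖(Complex.exp (-u) - 1 - (-u))‖ := by
            rw [norm_mul]
            have := norm_add_le (Gfn a c) (u^2)
            linarith
      _ ≤ (L^2 + b + 2*L*y0) + 1/16 + y0^2/16 := by
            have h1 : ‖u^2‖ = 1/16 := by
              rw [norm_pow, hu]; norm_num
            have h2 : ‖((y0^2:ℝ):ℂ)‖ = y0^2 := by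
              rw [Complex.norm_real, Real.norm_eq_abs,
                abs_of_pos (by positivity : (0:ℝ) < y0^2)]
            rw [h1, h2]
            have h3 : y0^2 * ‖(Complex.exp (-u) - 1 - (-u))‖ ≤ y0^2 * (1/16) :=
              mul_le_mul_of_nonneg_left hE (by positivity)
            linarith
    have hsplit : Gfn a w = (2*c - ((y0^2:ℝ):ℂ))*u
        + (Gfn a c + u^2 + ((y0^2:ℝ):ℂ) * (Complex.exp (-u) - 1 - (-u))) := by
      rw [hwcu, hexpand u]; ring
    have hlow : (y0^2 - 2*(L+y0))/4 - ((L^2 + b + 2*L*y0) + 1/16 + y0^2/16) ≤ ‖Gfn a w‖ := by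
      have hXY : ‖(2*c - ((y0^2:ℝ):ℂ))*u‖ ≤ ‖Gfn a w‖
          + ‖Gfn a c + u^2 + ((y0^2:ℝ):ℂ) * (Complex.exp (-u) - 1 - (-u))‖ := by
        have heq : (2*c - ((y0^2:ℝ):ℂ))*u = Gfn a w
            - (Gfn a c + u^2 + ((y0^2:ℝ):ℂ) * (Complex.exp (-u) - 1 - (-u))) := by
          rw [hsplit]; ring
        rw [heq]; exact norm_sub_le _ _
      linarith
    rw [hmdef]
    linarith
  have hm : ‖Gfn a c‖ < m := by rw [hmdef]; linarith
  obtain ⟨z, hzball, hz0⟩ := exists_zero_in_closedBall (Gfn_differentiable a) c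
    (by norm_num : (0:ℝ) < 1/4) hm hsphere
  refine ⟨z, ?_, hz0⟩
  have hzc : ‖z - c‖ ≤ 1/4 := by
    rw [Metric.mem_closedBall, dist_eq_norm] at hzball; exact hzball
  have him : |(z - c).im| ≤ 1/4 :=
    le_trans (Complex.abs_im_le_norm _) hzc
  have hcim : c.im = y0 := by rw [hcdef]; simp
  have hzim : 0 < z.im := by
    rw [Complex.sub_im, hcim] at him
    have := (abs_le.mp him).1
    linarith
  intro h
  rw [h] at hzim
  simp at hzim


/-- If `a ∈ (−π²/2, 0)` then `v₀(a) < 0`. -/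
theorem v0_neg_of_mem_Ioo (a : ℝ) (ha₁ : -(π ^ 2) / 2 < a) (ha₂ : a < 0) :
    v0 a < 0 := by
  have hπ : π ^ 2 < 10 := by nlinarith [Real.pi_lt_d2, Real.pi_pos]
  have ha5 : -a < 5 := by linarith
  have hane : a ≠ 0 := ne_of_lt ha₂
  obtain ⟨z₀, hz₀ne, hz₀G⟩ := exists_root_aux a ha₂ ha5
  have hz₀mem : z₀ ∈ charRoots a := (mem_charRoots_iff hane).mpr ⟨hz₀ne, hz₀G⟩
  set ρ : ℝ := (-a) / (1 + -a) with hρdef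
  have hρ0 : 0 < ρ := by
    rw [hρdef]
    apply div_pos <;> linarith
  set K : Set ℂ := ({z | Gfn a z = 0} ∩ {z | -1 ≤ z.re} ∩ {z | ρ ≤ ‖z‖})
      ∩ Metric.closedBall 0 5 with hKdef
  have hKclosed : IsClosed K := by
    apply IsClosed.inter
    · apply IsClosed.inter
      · apply IsClosed.inter
        · exact isClosed_eq (Gfn_differentiable a).continuous continuous_const
        · exact isClosed_le continuous_const Complex.continuous_re
      · exact isClosed_le continuous_const continuous_norm
    · exact Metric.isClosed_closedBall
  have hKcompact : IsCompact K :=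
    (isCompact_closedBall (0:ℂ) 5).of_isClosed_subset hKclosed Set.inter_subset_right
  have hKroot : ∀ z ∈ K, z ∈ charRoots a ∧ z.re < 0 := by
    rintro z ⟨⟨⟨hG, _⟩, hρz⟩, _⟩
    have hzne : z ≠ 0 := by
      intro h
      rw [h] at hρz
      have : ρ ≤ 0 := by simpa using hρz
      linarith
    exact ⟨(mem_charRoots_iff hane).mpr ⟨hzne, hG⟩, re_neg_of_root a ha₁ ha₂ hzne hG⟩
  have hmem : ∀ z ∈ charRoots a, -1 ≤ z.re → z ∈ K := by
    intro z hz h1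
    obtain ⟨hzne, hG⟩ := (mem_charRoots_iff hane).mp hz
    refine ⟨⟨⟨hG, h1⟩, norm_ge_of_root ha₂ hzne hG⟩, ?_⟩
    rw [Metric.mem_closedBall, dist_zero_right]
    exact norm_le_of_root ha₂ ha5.le hG h1
  have hbound : ∃ q < (0:ℝ), ∀ z ∈ charRoots a, z.re ≤ q := by
    by_cases hK : K.Nonempty
    · obtain ⟨w, hwK, hwmax⟩ := hKcompact.exists_isMaxOn hK Complex.continuous_re.continuousOn
      refine ⟨max w.re (-1), max_lt (hKroot w hwK).2 (by norm_num), ?_⟩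
      intro z hz
      rcases le_or_gt (-1) z.re with h1 | h1
      · exact le_trans (hwmax (hmem z hz h1)) (le_max_left _ _)
      · exact le_trans h1.le (le_max_right _ _)
    · refine ⟨-1, by norm_num, ?_⟩
      intro z hz
      by_contra h
      push_neg at h
      exact hK ⟨z, hmem z hz h.le⟩
  obtain ⟨q, hq0, hq⟩ := hbound
  have hle : v0 a ≤ q := by
    rw [v0]
    apply csSup_le
    · exact ⟨z₀.re, Set.mem_image_of_mem _ hz₀mem⟩
    · rintro x ⟨z, hz, rfl⟩
      exact hq z hz
  linarith
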